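/- Let a = 2·ln(27/16) and let f : [0,1]^2 → ℝ be defined by f(x,y) = (36/(1+8a))·[ ((5 − 6(y+x))/(6(y−x)))·1_{Q1}(x,y) + a·1_{Q2}(x,y) + 2a·1_{Q3∪Q4∪Q5}(x,y) + 1_{Q6}(x,y) ], where Q1 = [0,1/6]×[1/3,1/2), Q2 = [0,1/6]×[1/2,2/3], Q3 = [0,1/6]×[5/6,1], Q4 = [5/6,1]×[5/6,1], Q5 = [5/6,1]×[0,1/6], Q6 = [1/3,1/2]×[2/3,5/6]. Then f is a probability density: f ≥ 0 and ∫_{[0,1]^2} f(x,y) dx dy = 1. -/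

import Mathlib

open MeasureTheory Set

/-- The normalization constant a = 2·ln(27/16). -/
noncomputable def aNorm : ℝ := 2 * Real.log (27 / 16)

/-- The base density f of the hard instance construction. -/
noncomputable def baseDensity : ℝ × ℝ → ℝ := fun z =>
  (36 / (1 + 8 * aNorm)) *
    ((Set.Icc (0:ℝ) (1/6) ×ˢ Set.Ico (1/3:ℝ) (1/2)).indicator
        (fun w => (5 - 6 * (w.2 + w.1)) / (6 * (w.2 - w.1))) z
      + aNorm * (Set.Icc (0:ℝ) (1/6) ×ˢ Set.Icc (1/2:ℝ) (2/3)).indicator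
          (fun _ => (1:ℝ)) z
      + 2 * aNorm * ((Set.Icc (0:ℝ) (1/6) ×ˢ Set.Icc (5/6:ℝ) 1)
          ∪ (Set.Icc (5/6:ℝ) 1 ×ˢ Set.Icc (5/6:ℝ) 1)
          ∪ (Set.Icc (5/6:ℝ) 1 ×ˢ Set.Icc (0:ℝ) (1/6))).indicator
          (fun _ => (1:ℝ)) z
      + (Set.Icc (1/3:ℝ) (1/2) ×ˢ Set.Icc (2/3:ℝ) (5/6)).indicator
          (fun _ => (1:ℝ)) z)

lemma aNorm_pos : 0 < aNorm := by
  have : (0:ℝ) < Real.log (27/16) := Real.log_pos (by norm_num)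
  unfold aNorm; linarith

/-- Volume of a product of intervals. -/
lemma vol_prod (a b c d : ℝ) (h1 : a ≤ b) (h2 : c ≤ d) :
    ((volume : Measure (ℝ × ℝ)) (Icc a b ×ˢ Icc c d)).toReal = (b - a) * (d - c) := by
  rw [Measure.volume_eq_prod, Measure.prod_prod, Real.volume_Icc, Real.volume_Icc,
    ← ENNReal.ofReal_mul (by linarith), ENNReal.toReal_ofReal (by nlinarith)]

/-- Inner integral over y for the Q1 term. -/
lemma inner_integral (x : ℝ) (hx : x ∈ Icc (0:ℝ) (1/6)) :
    ∫ y in Ico (1/3:ℝ) (1/2), (5 - 6 * (y + x)) / (6 * (y - x)) =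
      -1/6 + ((5 - 12*x)/6) * (Real.log (1/2 - x) - Real.log (1/3 - x)) := by
  obtain ⟨hx0, hx6⟩ := hx
  have key : ∫ y in (1/3:ℝ)..(1/2), (5 - 6 * (y + x)) / (6 * (y - x)) =
      -1/6 + ((5 - 12*x)/6) * (Real.log (1/2 - x) - Real.log (1/3 - x)) := by
    have hder : ∀ y ∈ uIcc (1/3:ℝ) (1/2),
        HasDerivAt (fun y => -y + ((5 - 12*x)/6) * Real.log (y - x))
          ((5 - 6 * (y + x)) / (6 * (y - x))) y := by
      intro y hy
      rw [uIcc_of_le (by norm_num)] at hy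
      have hyx : (0:ℝ) < y - x := by
        have := hy.1; simp only [mem_Icc] at *; linarith
      have h1 : HasDerivAt (fun y : ℝ => y - x) 1 y := (hasDerivAt_id y).sub_const x
      have h2 : HasDerivAt (fun y : ℝ => Real.log (y - x)) (1 / (y - x)) y := by
        simpa using h1.log (ne_of_gt hyx)
      have h3 : HasDerivAt (fun y : ℝ => -y + ((5 - 12*x)/6) * Real.log (y - x))
          (-1 + ((5 - 12*x)/6) * (1 / (y - x))) y :=
        ((hasDerivAt_id y).neg).add (h2.const_mul _)
      convert h3 using 1
      field_simp
      ring
    have hcont :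
        IntervalIntegrable (fun y => (5 - 6 * (y + x)) / (6 * (y - x))) volume (1/3) (1/2) := by
      apply ContinuousOn.intervalIntegrable
      apply ContinuousOn.div
      · fun_prop
      · fun_prop
      · intro y hy
        rw [uIcc_of_le (by norm_num)] at hy
        have := hy.1
        simp only [mem_Icc] at *
        intro h; nlinarith [hy.1]
    rw [intervalIntegral.integral_eq_sub_of_hasDerivAt hder hcont]
    have e1 : (1/2 : ℝ) - x = 1/2 - x := rfl
    ring_nf
  rw [MeasureTheory.integral_Ico_eq_integral_Ioo, ← MeasureTheory.integral_Ioc_eq_integral_Ioo,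
    ← intervalIntegral.integral_of_le (by norm_num)]
  exact key

/-- Outer integral for the Q1 term. -/
lemma outer_integral :
    ∫ x in Icc (0:ℝ) (1/6),
      (-1/6 + ((5 - 12*x)/6) * (Real.log (1/2 - x) - Real.log (1/3 - x))) = aNorm / 36 := by
  set H : ℝ → ℝ := fun x => -x/6 + (1/6) * ((x - 1/2)*(2 - 6*x) * Real.log (1/2 - x)
      - (x - 1/3)*(3 - 6*x) * Real.log (1/3 - x) + x) with hH
  have hder : ∀ x ∈ uIcc (0:ℝ) (1/6),
      HasDerivAt H (-1/6 + ((5 - 12*x)/6) * (Real.log (1/2 - x) - Real.log (1/3 - x))) x := by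
    intro x hx
    rw [uIcc_of_le (by norm_num)] at hx
    obtain ⟨hx0, hx6⟩ := hx
    have p1 : (0:ℝ) < 1/2 - x := by linarith
    have p2 : (0:ℝ) < 1/3 - x := by linarith
    have l1 : HasDerivAt (fun x : ℝ => Real.log (1/2 - x)) (-(1 / (1/2 - x))) x := by
      have h : HasDerivAt (fun x : ℝ => 1/2 - x) (-1) x := (hasDerivAt_id x).const_sub (1/2 : ℝ)
      have := h.log (ne_of_gt p1)
      convert this using 1; ring
    have l2 : HasDerivAt (fun x : ℝ => Real.log (1/3 - x)) (-(1 / (1/3 - x))) x := by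
      have h : HasDerivAt (fun x : ℝ => 1/3 - x) (-1) x := (hasDerivAt_id x).const_sub (1/3 : ℝ)
      have := h.log (ne_of_gt p2)
      convert this using 1; ring
    have q1 : HasDerivAt (fun x : ℝ => (x - 1/2)*(2 - 6*x))
        (1 * (2 - 6*x) + (x - 1/2) * (-6)) x :=
      ((hasDerivAt_id x).sub_const _).mul (by simpa using ((hasDerivAt_id x).const_mul (6:ℝ)).const_sub (2:ℝ))
    have q2 : HasDerivAt (fun x : ℝ => (x - 1/3)*(3 - 6*x))
        (1 * (3 - 6*x) + (x - 1/3) * (-6)) x :=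
      ((hasDerivAt_id x).sub_const _).mul (by simpa using ((hasDerivAt_id x).const_mul (6:ℝ)).const_sub (3:ℝ))
    have m1 : HasDerivAt (fun x : ℝ => (x - 1/2)*(2 - 6*x) * Real.log (1/2 - x))
        ((1 * (2 - 6*x) + (x - 1/2) * (-6)) * Real.log (1/2 - x)
          + (x - 1/2)*(2 - 6*x) * (-(1 / (1/2 - x)))) x := q1.mul l1
    have m2 : HasDerivAt (fun x : ℝ => (x - 1/3)*(3 - 6*x) * Real.log (1/3 - x))
        ((1 * (3 - 6*x) + (x - 1/3) * (-6)) * Real.log (1/3 - x)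
          + (x - 1/3)*(3 - 6*x) * (-(1 / (1/3 - x)))) x := q2.mul l2
    have hbig : HasDerivAt H
        (-1/6 + (1/6) * (((1 * (2 - 6*x) + (x - 1/2) * (-6)) * Real.log (1/2 - x)
          + (x - 1/2)*(2 - 6*x) * (-(1 / (1/2 - x))))
          - ((1 * (3 - 6*x) + (x - 1/3) * (-6)) * Real.log (1/3 - x)
          + (x - 1/3)*(3 - 6*x) * (-(1 / (1/3 - x)))) + 1)) x := by
      have hlin : HasDerivAt (fun x : ℝ => -x/6) (-1/6) x := by
        simpa using ((hasDerivAt_id x).neg.div_const (6:ℝ))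
      exact hlin.add ((((m1.sub m2).add (hasDerivAt_id x))).const_mul (1/6 : ℝ))
    convert hbig using 1
    have e1 : (x - 1/2) * (-(1 / (1/2 - x))) = 1 := by
      rw [show (x - 1/2) * (-(1 / (1/2 - x))) = (1/2 - x) / (1/2 - x) by ring,
        div_self (ne_of_gt p1)]
    have e2 : (x - 1/3) * (-(1 / (1/3 - x))) = 1 := by
      rw [show (x - 1/3) * (-(1 / (1/3 - x))) = (1/3 - x) / (1/3 - x) by ring,
        div_self (ne_of_gt p2)]
    have e1' : (x - 1/2)*(2 - 6*x) * (-(1 / (1/2 - x))) = 2 - 6*x := by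
      rw [mul_comm (x - 1/2) (2 - 6*x), mul_assoc, e1, mul_one]
    have e2' : (x - 1/3)*(3 - 6*x) * (-(1 / (1/3 - x))) = 3 - 6*x := by
      rw [mul_comm (x - 1/3) (3 - 6*x), mul_assoc, e2, mul_one]
    rw [e1', e2']
    ring
  have hcont : IntervalIntegrable
      (fun x => -1/6 + ((5 - 12*x)/6) * (Real.log (1/2 - x) - Real.log (1/3 - x)))
      volume 0 (1/6) := by
    apply ContinuousOn.intervalIntegrable
    apply ContinuousOn.add continuousOn_const
    apply ContinuousOn.mul (by fun_prop)
    apply ContinuousOn.sub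
    · apply ContinuousOn.log (by fun_prop)
      intro x hx
      rw [uIcc_of_le (by norm_num)] at hx
      have := hx.2; simp only [mem_Icc] at *
      intro h; linarith [hx.2]
    · apply ContinuousOn.log (by fun_prop)
      intro x hx
      rw [uIcc_of_le (by norm_num)] at hx
      have := hx.2; simp only [mem_Icc] at *
      intro h; linarith [hx.2]
  have key := intervalIntegral.integral_eq_sub_of_hasDerivAt hder hcont
  rw [MeasureTheory.integral_Icc_eq_integral_Ioc, ← intervalIntegral.integral_of_le (by norm_num),
    key, hH]
  have v16 : (1/6 : ℝ) - 1/2 = -(1/3) := by norm_num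
  have l2 : Real.log (1/2 : ℝ) = -Real.log 2 := by
    rw [one_div, Real.log_inv]
  have l3 : Real.log (1/3 : ℝ) = -Real.log 3 := by
    rw [one_div, Real.log_inv]
  have l6 : Real.log (1/6 : ℝ) = -(Real.log 2 + Real.log 3) := by
    rw [one_div, Real.log_inv, show (6:ℝ) = 2*3 by norm_num,
      Real.log_mul (by norm_num) (by norm_num)]
  have la : aNorm = 2 * (3 * Real.log 3 - 4 * Real.log 2) := by
    unfold aNorm
    rw [Real.log_div (by norm_num) (by norm_num), show (27:ℝ) = 3^3 by norm_num,
      show (16:ℝ) = 2^4 by norm_num, Real.log_pow, Real.log_pow]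
    push_cast; ring
  norm_num
  rw [l2, l3, l6, la]
  ring

/-- Integral of the Q1 term. -/
lemma integrableOn_q1 :
    IntegrableOn (fun w : ℝ × ℝ => (5 - 6 * (w.2 + w.1)) / (6 * (w.2 - w.1)))
      (Icc (0:ℝ) (1/6) ×ˢ Ico (1/3:ℝ) (1/2)) volume := by
  apply Measure.integrableOn_of_bounded (M := 5)
  · apply ne_top_of_le_ne_top _ (measure_mono (prod_mono subset_rfl Ico_subset_Icc_self))
    rw [Measure.volume_eq_prod, Measure.prod_prod]
    exact (ENNReal.mul_lt_top (measure_Icc_lt_top) (measure_Icc_lt_top)).ne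
  · apply Measurable.aestronglyMeasurable
    apply Measurable.div <;> fun_prop
  · apply ae_restrict_of_forall_mem (measurableSet_Icc.prod measurableSet_Ico)
    rintro ⟨x, y⟩ ⟨⟨hx0, hx6⟩, hy3, hy2⟩
    simp only
    have hd : (1:ℝ) ≤ 6 * (y - x) := by linarith
    have hn0 : (0:ℝ) ≤ 5 - 6 * (y + x) := by linarith
    have hn5 : (5:ℝ) - 6 * (y + x) ≤ 5 := by linarith
    rw [Real.norm_eq_abs, abs_of_nonneg (div_nonneg hn0 (by linarith))]
    exact le_trans (div_le_self hn0 hd) hn5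

lemma q1_integral :
    ∫ z in (Icc (0:ℝ) (1/6) ×ˢ Ico (1/3:ℝ) (1/2)),
      (fun w : ℝ × ℝ => (5 - 6 * (w.2 + w.1)) / (6 * (w.2 - w.1))) z = aNorm / 36 := by
  rw [Measure.volume_eq_prod]
  rw [setIntegral_prod _ ((Measure.volume_eq_prod ℝ ℝ) ▸ integrableOn_q1)]
  rw [setIntegral_congr_fun measurableSet_Icc
    (fun x hx => inner_integral x hx)]
  exact outer_integral

theorem baseDensity_isProbabilityDensity :
    (∀ z : ℝ × ℝ, 0 ≤ baseDensity z) ∧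
      ∫ z in (Set.Icc (0:ℝ) 1 ×ˢ Set.Icc (0:ℝ) 1), baseDensity z = 1 := by
  have ha := aNorm_pos
  have hC : (0:ℝ) ≤ 36 / (1 + 8 * aNorm) := by
    apply div_nonneg (by norm_num); linarith
  constructor
  · intro z
    unfold baseDensity
    apply mul_nonneg hC
    have h1 : (0:ℝ) ≤ (Icc (0:ℝ) (1/6) ×ˢ Ico (1/3:ℝ) (1/2)).indicator
        (fun w : ℝ × ℝ => (5 - 6 * (w.2 + w.1)) / (6 * (w.2 - w.1))) z := by
      apply Set.indicator_nonneg
      rintro ⟨x, y⟩ ⟨⟨hx0, hx6⟩, hy3, hy2⟩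
      exact div_nonneg (by simp only; linarith) (by simp only; linarith)
    have h2 := Set.indicator_nonneg
      (s := Icc (0:ℝ) (1/6) ×ˢ Icc (1/2:ℝ) (2/3)) (f := fun _ : ℝ × ℝ => (1:ℝ))
      (fun _ _ => zero_le_one) z
    have h3 := Set.indicator_nonneg
      (s := (Icc (0:ℝ) (1/6) ×ˢ Icc (5/6:ℝ) 1) ∪ (Icc (5/6:ℝ) 1 ×ˢ Icc (5/6:ℝ) 1)
        ∪ (Icc (5/6:ℝ) 1 ×ˢ Icc (0:ℝ) (1/6))) (f := fun _ : ℝ × ℝ => (1:ℝ))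
      (fun _ _ => zero_le_one) z
    have h4 := Set.indicator_nonneg
      (s := Icc (1/3:ℝ) (1/2) ×ˢ Icc (2/3:ℝ) (5/6)) (f := fun _ : ℝ × ℝ => (1:ℝ))
      (fun _ _ => zero_le_one) z
    have := mul_nonneg ha.le h2
    have := mul_nonneg (by linarith : (0:ℝ) ≤ 2 * aNorm) h3
    linarith
  · set S := Icc (0:ℝ) 1 ×ˢ Icc (0:ℝ) 1 with hS
    set Q1 := Icc (0:ℝ) (1/6) ×ˢ Ico (1/3:ℝ) (1/2) with hQ1
    set Q2 := Icc (0:ℝ) (1/6) ×ˢ Icc (1/2:ℝ) (2/3) with hQ2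
    set Q3 := Icc (0:ℝ) (1/6) ×ˢ Icc (5/6:ℝ) 1 with hQ3
    set Q4 := Icc (5/6:ℝ) 1 ×ˢ Icc (5/6:ℝ) 1 with hQ4
    set Q5 := Icc (5/6:ℝ) 1 ×ˢ Icc (0:ℝ) (1/6) with hQ5
    set Q6 := Icc (1/3:ℝ) (1/2) ×ˢ Icc (2/3:ℝ) (5/6) with hQ6
    set g : ℝ × ℝ → ℝ := fun w => (5 - 6 * (w.2 + w.1)) / (6 * (w.2 - w.1)) with hg
    have mQ1 : MeasurableSet Q1 := measurableSet_Icc.prod measurableSet_Ico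
    have mQ2 : MeasurableSet Q2 := measurableSet_Icc.prod measurableSet_Icc
    have mQ3 : MeasurableSet Q3 := measurableSet_Icc.prod measurableSet_Icc
    have mQ4 : MeasurableSet Q4 := measurableSet_Icc.prod measurableSet_Icc
    have mQ5 : MeasurableSet Q5 := measurableSet_Icc.prod measurableSet_Icc
    have mQ6 : MeasurableSet Q6 := measurableSet_Icc.prod measurableSet_Icc
    have mU : MeasurableSet (Q3 ∪ Q4 ∪ Q5) := (mQ3.union mQ4).union mQ5
    -- finiteness of volumes
    have vfin : ∀ a b c d : ℝ, volume (Icc a b ×ˢ Icc c d) ≠ ⊤ := by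
      intro a b c d
      rw [Measure.volume_eq_prod, Measure.prod_prod]
      exact (ENNReal.mul_lt_top measure_Icc_lt_top measure_Icc_lt_top).ne
    -- subset facts
    have hQ1S : Q1 ⊆ S := prod_mono (Icc_subset_Icc le_rfl (by norm_num))
      (Ico_subset_Icc_self.trans (Icc_subset_Icc (by norm_num) (by norm_num)))
    have hQ2S : Q2 ⊆ S := prod_mono (Icc_subset_Icc le_rfl (by norm_num))
      (Icc_subset_Icc (by norm_num) (by norm_num))
    have hQ3S : Q3 ⊆ S := prod_mono (Icc_subset_Icc le_rfl (by norm_num))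
      (Icc_subset_Icc (by norm_num) le_rfl)
    have hQ4S : Q4 ⊆ S := prod_mono (Icc_subset_Icc (by norm_num) le_rfl)
      (Icc_subset_Icc (by norm_num) le_rfl)
    have hQ5S : Q5 ⊆ S := prod_mono (Icc_subset_Icc (by norm_num) le_rfl)
      (Icc_subset_Icc le_rfl (by norm_num))
    have hUS : Q3 ∪ Q4 ∪ Q5 ⊆ S := union_subset (union_subset hQ3S hQ4S) hQ5S
    have hQ6S : Q6 ⊆ S := prod_mono (Icc_subset_Icc (by norm_num) (by norm_num))
      (Icc_subset_Icc (by norm_num) (by norm_num))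
    -- integrability
    have i1 : IntegrableOn (Q1.indicator g) S volume :=
      (integrableOn_q1.integrable_indicator mQ1).integrableOn
    have iconst : ∀ (Q : Set (ℝ × ℝ)), MeasurableSet Q → volume Q ≠ ⊤ →
        Integrable (Q.indicator (fun _ : ℝ × ℝ => (1:ℝ))) volume := by
      intro Q mQ hfin
      exact (integrableOn_const hfin (by simp) : IntegrableOn (fun _ : ℝ × ℝ => (1:ℝ)) Q volume).integrable_indicator mQ
    have hUfin : volume (Q3 ∪ Q4 ∪ Q5) ≠ ⊤ := by
      apply ne_top_of_le_ne_top (vfin 0 1 0 1)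
      exact measure_mono hUS
    have i2 : IntegrableOn (fun z => aNorm * Q2.indicator (fun _ => (1:ℝ)) z) S volume :=
      ((iconst Q2 mQ2 (vfin _ _ _ _)).const_mul aNorm).integrableOn
    have i3 : IntegrableOn
        (fun z => 2 * aNorm * (Q3 ∪ Q4 ∪ Q5).indicator (fun _ => (1:ℝ)) z) S volume :=
      ((iconst _ mU hUfin).const_mul (2 * aNorm)).integrableOn
    have i4 : IntegrableOn (Q6.indicator (fun _ => (1:ℝ))) S volume :=
      (iconst Q6 mQ6 (vfin _ _ _ _)).integrableOn
    -- volumes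
    have vol26 : ∀ a b c d : ℝ, a ≤ b → c ≤ d → b - a = 1/6 → d - c = 1/6 →
        volume (Icc a b ×ˢ Icc c d) = ENNReal.ofReal (1/36) := by
      intro a b c d h1 h2 h3 h4
      rw [Measure.volume_eq_prod, Measure.prod_prod, Real.volume_Icc, Real.volume_Icc,
        h3, h4, ← ENNReal.ofReal_mul (by norm_num)]
      norm_num
    -- disjointness
    have d34 : Disjoint Q3 Q4 := by
      rw [Set.disjoint_left]
      rintro ⟨x, y⟩ ⟨⟨_, h1⟩, _⟩ ⟨⟨h2, _⟩, _⟩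
      simp only at h1 h2; linarith
    have d345 : Disjoint (Q3 ∪ Q4) Q5 := by
      rw [Set.disjoint_left]
      rintro ⟨x, y⟩ (⟨_, ⟨h1, _⟩⟩ | ⟨_, ⟨h1, _⟩⟩) ⟨_, ⟨_, h2⟩⟩ <;>
        (simp only at h1 h2; linarith)
    have vU : volume (Q3 ∪ Q4 ∪ Q5) = ENNReal.ofReal (1/12) := by
      rw [measure_union d345 mQ5, measure_union d34 mQ4,
        vol26 0 (1/6) (5/6) 1 (by norm_num) (by norm_num) (by norm_num) (by norm_num),
        vol26 (5/6) 1 (5/6) 1 (by norm_num) (by norm_num) (by norm_num) (by norm_num),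
        vol26 (5/6) 1 0 (1/6) (by norm_num) (by norm_num) (by norm_num) (by norm_num),
        ← ENNReal.ofReal_add (by norm_num) (by norm_num),
        ← ENNReal.ofReal_add (by norm_num) (by norm_num)]
      norm_num
    -- the four integrals
    have A1 : ∫ z in S, Q1.indicator g z = aNorm / 36 := by
      rw [setIntegral_indicator mQ1, inter_eq_self_of_subset_right hQ1S]
      exact q1_integral
    have A2 : ∫ z in S, aNorm * Q2.indicator (fun _ => (1:ℝ)) z = aNorm * (1/36) := by
      rw [integral_const_mul, setIntegral_indicator mQ2, inter_eq_self_of_subset_right hQ2S,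
        setIntegral_const, smul_eq_mul, mul_one, measureReal_def,
        vol26 0 (1/6) (1/2) (2/3) (by norm_num) (by norm_num) (by norm_num) (by norm_num),
        ENNReal.toReal_ofReal (by norm_num)]
    have A3 : ∫ z in S, 2 * aNorm * (Q3 ∪ Q4 ∪ Q5).indicator (fun _ => (1:ℝ)) z
        = 2 * aNorm * (1/12) := by
      rw [integral_const_mul, setIntegral_indicator mU, inter_eq_self_of_subset_right hUS,
        setIntegral_const, smul_eq_mul, mul_one, measureReal_def, vU, ENNReal.toReal_ofReal (by norm_num)]
    have A4 : ∫ z in S, Q6.indicator (fun _ => (1:ℝ)) z = 1/36 := by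
      rw [setIntegral_indicator mQ6, inter_eq_self_of_subset_right hQ6S,
        setIntegral_const, smul_eq_mul, mul_one, measureReal_def,
        vol26 (1/3) (1/2) (2/3) (5/6) (by norm_num) (by norm_num) (by norm_num) (by norm_num),
        ENNReal.toReal_ofReal (by norm_num)]
    have i12 : IntegrableOn
        (fun z => Q1.indicator g z + aNorm * Q2.indicator (fun _ => (1:ℝ)) z) S volume :=
      i1.add i2
    have i123 : IntegrableOn
        (fun z => Q1.indicator g z + aNorm * Q2.indicator (fun _ => (1:ℝ)) z
          + 2 * aNorm * (Q3 ∪ Q4 ∪ Q5).indicator (fun _ => (1:ℝ)) z) S volume :=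
      i12.add i3
    unfold baseDensity
    rw [integral_const_mul, integral_add i123 i4,
      integral_add i12 i3, integral_add i1 i2, A1, A2, A3, A4]
    have hne : (1:ℝ) + 8 * aNorm ≠ 0 := by linarith
    field_simp
    ring
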